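/- Let G be a simple graph on n vertices with a designated Hamiltonian cycle C, and let uv and xy be two interlacing chords of G with u ≺ x ≺ v ≺ y. Then G contains a nontrivial cycle of length at least n − d_C(u,x) − d_C(v,y) + 2; in particular, G contains a nontrivial cycle missing at most d_C(u,x) + d_C(v,y) vertices. -/

import Mathlib

private def upWalk {n : ℕ} (G : SimpleGraph (ZMod n)) (hC : ∀ i : ZMod n, G.Adj i (i + 1))
    (i : ZMod n) : (k : ℕ) → G.Walk i (i + (k : ZMod n))
  | 0 => SimpleGraph.Walk.nil.copy rfl (by simp)
  | (k+1) => ((upWalk G hC i k).concat (hC (i + (k : ZMod n)))).copy rfl (by push_cast; ring)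

private lemma upWalk_length {n : ℕ} (G : SimpleGraph (ZMod n)) (hC : ∀ i : ZMod n, G.Adj i (i + 1))
    (i : ZMod n) (k : ℕ) : (upWalk G hC i k).length = k := by
  induction k with
  | zero => simp [upWalk]
  | succ k ih => simp [upWalk, ih]

private lemma upWalk_support {n : ℕ} (G : SimpleGraph (ZMod n)) (hC : ∀ i : ZMod n, G.Adj i (i + 1))
    (i : ZMod n) (k : ℕ) : (upWalk G hC i k).support =
      (List.range (k+1)).map (fun j : ℕ => i + (j : ZMod n)) := by
  induction k with
  | zero => simp [upWalk, List.range_succ]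
  | succ k ih =>
      simp [upWalk, ih, List.range_succ]
      ring

private lemma upWalk_edges {n : ℕ} (G : SimpleGraph (ZMod n)) (hC : ∀ i : ZMod n, G.Adj i (i + 1))
    (i : ZMod n) (k : ℕ) : (upWalk G hC i k).edges =
      (List.range k).map (fun j : ℕ => s(i + (j : ZMod n), i + (j : ZMod n) + 1)) := by
  induction k with
  | zero => simp [upWalk]
  | succ k ih =>
      simp [upWalk, ih, List.range_succ]



/-!  We formalize "a graph `G` on `n` vertices with a designated Hamiltonian cycle `C`
(with a fixed cyclic orientation)" by taking the vertex set to be `ZMod n` (with `3 ≤ n`)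
and the designated Hamiltonian cycle to be `0, 1, 2, ..., n-1, 0`, which is a Hamiltonian
cycle of `G` thanks to the hypothesis `∀ i : ZMod n, G.Adj i (i + 1)`.  -/

/-- The length of the path from `x` to `y` along the designated Hamiltonian cycle,
following the fixed orientation; this is `d_C(x, y)`. -/
def dC {n : ℕ} (x y : ZMod n) : ℕ := (y - x).val

/-- `CBtw x y z` formalizes `x ≺ y ≺ z`: traversing the cycle starting from `x`
(in the fixed orientation), one meets `y` (strictly after `x`) and then `z`. -/
def CBtw {n : ℕ} (x y z : ZMod n) : Prop := 0 < dC x y ∧ dC x y < dC x z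

/-- The set of vertices on the path from `a` to `b` along the cycle (following the
orientation), inclusive of both endpoints.  The two *domains* of a chord `{a, b}` are
`arc a b` and `arc b a`. -/
def arc {n : ℕ} (a b : ZMod n) : Set (ZMod n) := {v | dC a v ≤ dC a b}

/-- The edge set of the designated Hamiltonian cycle. -/
def stdEdges (n : ℕ) : Set (Sym2 (ZMod n)) := {e | ∃ i : ZMod n, e = s(i, i + 1)}

/-- `{a, b}` is a chord of `G`: an edge of `G` not belonging to the designated
Hamiltonian cycle. -/
def IsChordPair {n : ℕ} (G : SimpleGraph (ZMod n)) (a b : ZMod n) : Prop :=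
  G.Adj a b ∧ s(a, b) ∉ stdEdges n

/-- The chords `{a, b}` and `{x, y}` interlace: their endpoints are distinct and appear
in alternating order around the cycle. -/
def Interlace {n : ℕ} (a b x y : ZMod n) : Prop :=
  (CBtw a x b ∧ CBtw b y a) ∨ (CBtw a y b ∧ CBtw b x a)

/-- `G` contains a cycle, distinct from the designated Hamiltonian cycle
(i.e. a *nontrivial* cycle), of length at least `L`. -/
def HasNontrivialCycleOfLength {n : ℕ} (G : SimpleGraph (ZMod n)) (L : ℝ) : Prop :=
  ∃ (w : ZMod n) (W : G.Walk w w), W.IsCycle ∧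
    {e | e ∈ W.edges} ≠ stdEdges n ∧ L ≤ (W.length : ℝ)

/-- Given two interlacing chords `uv` and `xy` with `u ≺ x ≺ v ≺ y`, the graph `G`
contains a nontrivial cycle of length at least `n - d_C(u,x) - d_C(v,y) + 2`; in
particular, a nontrivial cycle missing at most `d_C(u,x) + d_C(v,y)` vertices. -/
theorem nontrivial_cycle_of_interlacing_pair
    (n : ℕ) (G : SimpleGraph (ZMod n)) (hn : 3 ≤ n)
    (hC : ∀ i : ZMod n, G.Adj i (i + 1))
    (u v x y : ZMod n)
    (huv : IsChordPair G u v) (hxy : IsChordPair G x y)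
    (h1 : CBtw u x v) (h2 : CBtw v y u) :
    ∃ (w : ZMod n) (W : G.Walk w w), W.IsCycle ∧ {e | e ∈ W.edges} ≠ stdEdges n ∧
      (n : ℝ) - (dC u x : ℝ) - (dC v y : ℝ) + 2 ≤ (W.length : ℝ) ∧
      (n : ℝ) - (W.length : ℝ) ≤ (dC u x : ℝ) + (dC v y : ℝ) := by
  haveI : NeZero n := ⟨by omega⟩
  obtain ⟨h11, h12⟩ := h1
  obtain ⟨h21, h22⟩ := h2
  simp only [dC, CBtw] at h11 h12 h21 h22 ⊢
  set a := (x - u).val with hadef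
  set b := (v - x).val with hbdef
  set c := (y - v).val with hcdef
  set d := (u - y).val with hddef
  set p := (v - u).val with hpdef
  set q := (u - v).val with hqdef
  have hvu : v - u ≠ 0 := by
    intro h
    rw [hpdef, h] at h12
    simp at h12
  haveI : NeZero (v - u) := ⟨hvu⟩
  have hq : q = n - p := by
    have h := ZMod.val_neg_of_ne_zero (v - u)
    rw [show -(v-u) = u - v by ring] at h
    exact h
  have hb : b = p - a := by
    have h := ZMod.val_sub (le_of_lt h12)
    rw [show (v - u) - (x - u) = v - x by ring] at h
    exact h
  have hd : d = q - c := by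
    have h := ZMod.val_sub (le_of_lt h22)
    rw [show (u - v) - (y - v) = u - y by ring] at h
    exact h
  have hpn : p < n := ZMod.val_lt _
  have habcd : a + b + c + d = n := by omega
  have hb0 : 0 < b := by omega
  have hd0 : 0 < d := by omega
  -- vertex coordinates relative to y
  have key : ∀ z w : ZMod n, ((z - w).val : ZMod n) = z - w := by
    intro z w; rw [ZMod.natCast_val, ZMod.cast_id]
  have hu' : u = y + (d : ZMod n) := by rw [hddef, key]; ring
  have hx' : x = y + ((d + a : ℕ) : ZMod n) := by
    push_cast; rw [hddef, hadef, key, key]; ring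
  have hv2 : v = y + ((d + a + b : ℕ) : ZMod n) := by
    push_cast; rw [hddef, hadef, hbdef, key, key, key]; ring
  have hv' : x + (b : ZMod n) = v := by rw [hbdef, key]; ring
  have E : ∀ {j k : ℕ}, y + (j:ZMod n) = y + (k:ZMod n) → j < n → k < n → j = k := by
    intro j k h hj hk
    have h2 : (j : ZMod n) = (k : ZMod n) := add_left_cancel h
    have := congrArg ZMod.val h2
    rwa [ZMod.val_cast_of_lt hj, ZMod.val_cast_of_lt hk] at this
  have hys : ∀ j : ℕ, y + (j:ZMod n) + 1 = y + ((j+1:ℕ):ZMod n) := by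
    intro j; push_cast; ring
  have hxj : ∀ j : ℕ, y + ((d + a : ℕ):ZMod n) + (j:ZMod n) = y + ((d+a+j:ℕ):ZMod n) := by
    intro j; push_cast; ring
  -- the walk
  let Q : G.Walk y x :=
    (upWalk G hC y d).append
      ((SimpleGraph.Walk.cons huv.1 ((upWalk G hC x b).reverse.copy hv' rfl)).copy hu' rfl)
  have hQsupp : Q.support =
      (List.range (d+1)).map (fun j : ℕ => y + (j:ZMod n)) ++
      ((List.range (b+1)).map (fun j : ℕ => x + (j:ZMod n))).reverse := by
    simp only [Q, SimpleGraph.Walk.support_append, SimpleGraph.Walk.support_copy,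
      SimpleGraph.Walk.support_cons, SimpleGraph.Walk.support_reverse, upWalk_support,
      List.tail_cons]
  have hQnodup : Q.support.Nodup := by
    rw [hQsupp]
    refine List.Nodup.append ?_ (List.nodup_reverse.mpr ?_) ?_
    · refine List.Nodup.map_on ?_ List.nodup_range
      intro j hj k hk h
      simp only [List.mem_range] at hj hk
      exact E h (by omega) (by omega)
    · refine List.Nodup.map_on ?_ List.nodup_range
      intro j hj k hk h
      simp only [List.mem_range] at hj hk
      rw [hx', hxj, hxj] at h
      have := E h (by omega) (by omega)
      omega
    · intro t ht1 ht2
      rw [List.mem_reverse] at ht2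
      obtain ⟨j, hj, rfl⟩ := List.mem_map.1 ht1
      obtain ⟨k, hk, hkeq⟩ := List.mem_map.1 ht2
      simp only [List.mem_range] at hj hk
      rw [hx', hxj] at hkeq
      have := E hkeq.symm (by omega) (by omega)
      omega
  have hQedges : Q.edges =
      (List.range d).map (fun j : ℕ => s(y + (j:ZMod n), y + (j:ZMod n) + 1)) ++
      (s(u,v) :: ((List.range b).map (fun j : ℕ => s(x + (j:ZMod n), x + (j:ZMod n) + 1))).reverse) := by
    simp only [Q, SimpleGraph.Walk.edges_append, SimpleGraph.Walk.edges_copy,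
      SimpleGraph.Walk.edges_cons, SimpleGraph.Walk.edges_reverse, upWalk_edges]
  have hmain : s(x,y) ∉ Q.edges := by
    rw [hQedges]
    intro h
    simp only [List.mem_append, List.mem_cons, List.mem_reverse, List.mem_map,
      List.mem_range] at h
    rcases h with ⟨j, hj, heq⟩ | heq | ⟨j, hj, heq⟩
    · -- heq : s(y + j, y + j + 1) = s(x, y)
      rw [Sym2.eq_iff, hys, hx'] at heq
      rcases heq with ⟨e1, e2⟩ | ⟨e1, e2⟩
      · have h2 : j+1 = 0 := E (by simpa using e2) (by omega) (by omega)
        omega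
      · have h1 : j = 0 := E (by simpa using e1) (by omega) (by omega)
        have h2 : j + 1 = d + a := E e2 (by omega) (by omega)
        omega
    · -- heq : s(x, y) = s(u, v)
      rw [Sym2.eq_iff, hx', hu', hv2] at heq
      rcases heq with ⟨e1, e2⟩ | ⟨e1, e2⟩
      · have := E e1 (by omega) (by omega)
        omega
      · have h2 : (0:ℕ) = d := E (by simpa using e2) (by omega) (by omega)
        omega
    · -- heq : s(x + j, x + j + 1) = s(x, y)
      rw [hx', hxj, hys] at heq
      rw [Sym2.eq_iff] at heq
      rcases heq with ⟨e1, e2⟩ | ⟨e1, e2⟩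
      · have h2 : d+a+j+1 = 0 := E (by simpa using e2) (by omega) (by omega)
        omega
      · have h2 : d+a+j+1 = d+a := E e2 (by omega) (by omega)
        omega
  have hQpath : Q.IsPath := (SimpleGraph.Walk.isPath_def Q).mpr hQnodup
  let W : G.Walk x x := SimpleGraph.Walk.cons hxy.1 Q
  have hWcyc : W.IsCycle := (SimpleGraph.Walk.cons_isCycle_iff Q hxy.1).mpr ⟨hQpath, hmain⟩
  have hWlen : W.length = b + d + 2 := by
    simp only [W, Q, SimpleGraph.Walk.length_cons, SimpleGraph.Walk.length_append,
      SimpleGraph.Walk.length_copy, SimpleGraph.Walk.length_reverse, upWalk_length]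
    omega
  have hmemW : s(x,y) ∈ W.edges := by
    simp [W, SimpleGraph.Walk.edges_cons]
  refine ⟨x, W, hWcyc, ?_, ?_, ?_⟩
  · intro hset
    exact hxy.2 (hset ▸ hmemW)
  · rw [hWlen]
    have hncast : (n:ℝ) = a + b + c + d := by exact_mod_cast congrArg Nat.cast habcd.symm
    push_cast
    linarith
  · rw [hWlen]
    have hncast : (n:ℝ) = a + b + c + d := by exact_mod_cast congrArg Nat.cast habcd.symm
    push_cast
    linarith
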